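/- Let G : ℝ^{d_z} → ℝ^{d_x} be differentiable at z and let φ : ℝ^{d_x} → ℝ^m be differentiable at G(z). Suppose the composition φ ∘ G is a constant function on ℝ^{d_z}, and the Fréchet derivative of φ at G(z) is surjective. Then the rank of the Fréchet derivative of G at z is at most d_x − m. In particular, if d_x − m < d_z, then rank(fderiv ℝ G z) < d_z, i.e., the Jacobian of G at z is rank-deficient. -/

import Mathlib

/-- **Rank deficiency from a constant submersion constraint (Theorem 1, part 2).**
Let `G : ℝ^{d_z} → ℝ^{d_x}` be differentiable at `z` and `φ : ℝ^{d_x} → ℝ^m` be differentiable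
at `G z`. If `φ ∘ G` is constant and the Fréchet derivative of `φ` at `G z` is surjective, then
the rank of the Fréchet derivative of `G` at `z` is at most `d_x - m`; in particular, if
`d_x - m < d_z` then the Jacobian of `G` at `z` is rank-deficient. -/
theorem rank_fderiv_le_of_constant_submersion (dz dx m : ℕ)
    (G : EuclideanSpace ℝ (Fin dz) → EuclideanSpace ℝ (Fin dx))
    (φ : EuclideanSpace ℝ (Fin dx) → EuclideanSpace ℝ (Fin m))
    (z : EuclideanSpace ℝ (Fin dz))
    (hG : DifferentiableAt ℝ G z) (hφ : DifferentiableAt ℝ φ (G z))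
    (c : EuclideanSpace ℝ (Fin m)) (hconst : ∀ w, φ (G w) = c)
    (hsurj : Function.Surjective (fderiv ℝ φ (G z))) :
    Module.finrank ℝ (LinearMap.range ((fderiv ℝ G z) : EuclideanSpace ℝ (Fin dz) →ₗ[ℝ] EuclideanSpace ℝ (Fin dx))) ≤ dx - m ∧
      (dx - m < dz →
        Module.finrank ℝ (LinearMap.range ((fderiv ℝ G z) : EuclideanSpace ℝ (Fin dz) →ₗ[ℝ] EuclideanSpace ℝ (Fin dx))) < dz) := by
  set A := (fderiv ℝ G z : EuclideanSpace ℝ (Fin dz) →ₗ[ℝ] EuclideanSpace ℝ (Fin dx))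
  set B := (fderiv ℝ φ (G z) : EuclideanSpace ℝ (Fin dx) →ₗ[ℝ] EuclideanSpace ℝ (Fin m))
  have hchain : fderiv ℝ (φ ∘ G) z = (fderiv ℝ φ (G z)).comp (fderiv ℝ G z) :=
    fderiv_comp z hφ hG
  have hzero : fderiv ℝ (φ ∘ G) z = 0 := by
    have : (φ ∘ G) = fun _ => c := funext hconst
    rw [this]; exact fderiv_const_apply c
  have hsub : LinearMap.range A ≤ LinearMap.ker B := by
    rintro x ⟨y, rfl⟩
    have : ((fderiv ℝ φ (G z)).comp (fderiv ℝ G z)) y = 0 := by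
      rw [← hchain, hzero]; rfl
    exact LinearMap.mem_ker.mpr this
  have hrankB : Module.finrank ℝ (LinearMap.range B) = m := by
    rw [LinearMap.range_eq_top.mpr (show Function.Surjective ⇑B from hsurj)]
    simp [finrank_euclideanSpace]
  have hker : Module.finrank ℝ (LinearMap.ker B) = dx - m := by
    have h := LinearMap.finrank_range_add_finrank_ker B
    rw [hrankB, finrank_euclideanSpace, Fintype.card_fin] at h
    omega
  have h1 : Module.finrank ℝ (LinearMap.range A) ≤ dx - m := by
    rw [← hker]; exact Submodule.finrank_mono hsub
  exact ⟨h1, fun h => lt_of_le_of_lt h1 h⟩
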